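/- Fix a real number R and ρ ∈ [−1,0]. Then E_c^{ML}(R,Q) ≥ min over pairs (T,V) with supp(V) ⊆ supp(Q) of { D(T∘V‖Q∘P) − ρ·( R − D(T∘V‖T×Q) ) }. In the case of equality, every minimizer of E_c^{ML}(R,Q) also minimizes the right-hand side and satisfies D(T∘V‖T×Q) = R when ρ ∈ (−1,0), respectively D(T∘V‖T×Q) ≥ R when ρ = 0 and D(T∘V‖T×Q) ≤ R when ρ = −1. Conversely, if the right-hand minimum is attained by some (T_ρ,V_ρ) satisfying the corresponding condition (D(T_ρ∘V_ρ‖T_ρ×Q) = R, or ≥ R for ρ = 0, or ≤ R for ρ = −1), then (T_ρ,V_ρ) also attains the minimum defining E_c^{ML}(R,Q) and equality holds. -/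

import Mathlib

open scoped BigOperators
open Filter Topology

/-- `f` is a probability mass function on a finite alphabet. -/
def IsPMF {α : Type*} [Fintype α] (f : α → ℝ) : Prop :=
  (∀ a, 0 ≤ f a) ∧ ∑ a, f a = 1

/-- `P` is a discrete memoryless channel from `𝓧` to `𝓨`. -/
def IsChannel {𝓧 𝓨 : Type*} [Fintype 𝓧] [Fintype 𝓨] (P : 𝓧 → 𝓨 → ℝ) : Prop :=
  ∀ x, IsPMF (P x)

/-- `V` is a conditional pmf on `𝓧` given `𝓨`. -/
def IsCondPMF {𝓧 𝓨 : Type*} [Fintype 𝓧] [Fintype 𝓨] (V : 𝓨 → 𝓧 → ℝ) : Prop :=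
  ∀ y, IsPMF (V y)

/-- one term `s·log(s/t)` of a KL divergence, with the conventions
    `0·log(0/t) = 0` and `s·log(s/0) = +∞` for `s > 0`. -/
noncomputable def klTerm (s t : ℝ) : EReal :=
  if s = 0 then 0 else if t = 0 then ⊤ else ((s * Real.log (s / t) : ℝ) : EReal)

/-- `D(T∘V ‖ Q∘P)`. -/
noncomputable def DQP {𝓧 𝓨 : Type*} [Fintype 𝓧] [Fintype 𝓨]
    (T : 𝓨 → ℝ) (V : 𝓨 → 𝓧 → ℝ) (Q : 𝓧 → ℝ) (P : 𝓧 → 𝓨 → ℝ) : EReal :=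
  ∑ y, ∑ x, klTerm (T y * V y x) (Q x * P x y)

/-- `D(T∘V ‖ T×Q)`. -/
noncomputable def DTQ {𝓧 𝓨 : Type*} [Fintype 𝓧] [Fintype 𝓨]
    (T : 𝓨 → ℝ) (V : 𝓨 → 𝓧 → ℝ) (Q : 𝓧 → ℝ) : EReal :=
  ∑ y, ∑ x, klTerm (T y * V y x) (T y * Q x)

/-- Gallager's function `E₀(ρ,Q)` (for `ρ > −1`). -/
noncomputable def E0 {𝓧 𝓨 : Type*} [Fintype 𝓧] [Fintype 𝓨]
    (ρ : ℝ) (Q : 𝓧 → ℝ) (P : 𝓧 → 𝓨 → ℝ) : ℝ :=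
  - Real.log (∑ y, (∑ x, Q x * P x y ^ (1 / (1 + ρ))) ^ (1 + ρ))

/-- The joint distribution `T_ρ∘V_ρ` on `𝓧 × 𝓨` (for `ρ > −1`). -/
noncomputable def Jrho {𝓧 𝓨 : Type*} [Fintype 𝓧] [Fintype 𝓨]
    (ρ : ℝ) (Q : 𝓧 → ℝ) (P : 𝓧 → 𝓨 → ℝ) (x : 𝓧) (y : 𝓨) : ℝ :=
  Q x * P x y ^ (1 / (1 + ρ)) * (∑ a, Q a * P a y ^ (1 / (1 + ρ))) ^ ρ /
    ∑ y', (∑ a, Q a * P a y' ^ (1 / (1 + ρ))) ^ (1 + ρ)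

/-- `max_{x : Q(x) > 0} P(y|x)`. -/
noncomputable def maxP {𝓧 𝓨 : Type*} (Q : 𝓧 → ℝ) (P : 𝓧 → 𝓨 → ℝ) (y : 𝓨) : ℝ :=
  ⨆ x : {x // 0 < Q x}, P x.1 y

/-- `E₀(−1,Q) = −log ∑_y max_{x : Q(x)>0} P(y|x)`. -/
noncomputable def E0m1 {𝓧 𝓨 : Type*} [Fintype 𝓧] [Fintype 𝓨]
    (Q : 𝓧 → ℝ) (P : 𝓧 → 𝓨 → ℝ) : ℝ :=
  - Real.log (∑ y, maxP Q P y)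

/-- `E₀(ρ,Q)` extended to `ρ = −1`. -/
noncomputable def E0full {𝓧 𝓨 : Type*} [Fintype 𝓧] [Fintype 𝓨]
    (ρ : ℝ) (Q : 𝓧 → ℝ) (P : 𝓧 → 𝓨 → ℝ) : ℝ :=
  if ρ = -1 then E0m1 Q P else E0 ρ Q P

/-- `T_{−1}(y) ∝ max_{a : Q(a)>0} P(y|a)`. -/
noncomputable def Tm1 {𝓧 𝓨 : Type*} [Fintype 𝓧] [Fintype 𝓨]
    (Q : 𝓧 → ℝ) (P : 𝓧 → 𝓨 → ℝ) (y : 𝓨) : ℝ :=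
  maxP Q P y / ∑ y', maxP Q P y'

/-- `V` is admissible at `ρ = −1`: `V(x|y) = 0` for every `x` outside
    `argmax_{a : Q(a)>0} P(y|a)`. -/
def AdmissibleAtM1 {𝓧 𝓨 : Type*} [Fintype 𝓧] [Fintype 𝓨]
    (Q : 𝓧 → ℝ) (P : 𝓧 → 𝓨 → ℝ) (V : 𝓨 → 𝓧 → ℝ) : Prop :=
  ∀ y x, ¬ (0 < Q x ∧ ∀ a, 0 < Q a → P a y ≤ P x y) → V y x = 0

/-- the error exponent `E_e(R,Q)`. -/
noncomputable def Ee {𝓧 𝓨 : Type*} [Fintype 𝓧] [Fintype 𝓨]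
    (R : ℝ) (Q : 𝓧 → ℝ) (P : 𝓧 → 𝓨 → ℝ) : EReal :=
  sInf {v | ∃ T : 𝓨 → ℝ, ∃ V : 𝓨 → 𝓧 → ℝ, IsPMF T ∧ IsCondPMF V ∧
    v = DQP T V Q P + max (DTQ T V Q - (R : EReal)) 0}

/-- the ML correct-decoding exponent `E_c^{ML}(R,Q)`. -/
noncomputable def EcML {𝓧 𝓨 : Type*} [Fintype 𝓧] [Fintype 𝓨]
    (R : ℝ) (Q : 𝓧 → ℝ) (P : 𝓧 → 𝓨 → ℝ) : EReal :=
  sInf {v | ∃ T : 𝓨 → ℝ, ∃ V : 𝓨 → 𝓧 → ℝ, IsPMF T ∧ IsCondPMF V ∧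
    v = DQP T V Q P + max ((R : EReal) - DTQ T V Q) 0}

/-- the strict correct-decoding exponent `E_c(R,Q)` (`+∞` if infeasible). -/
noncomputable def Ec {𝓧 𝓨 : Type*} [Fintype 𝓧] [Fintype 𝓨]
    (R : ℝ) (Q : 𝓧 → ℝ) (P : 𝓧 → 𝓨 → ℝ) : EReal :=
  sInf {v | ∃ T : 𝓨 → ℝ, ∃ V : 𝓨 → 𝓧 → ℝ, IsPMF T ∧ IsCondPMF V ∧
    (R : EReal) ≤ DTQ T V Q ∧ v = DQP T V Q P}

/-- the mutual information `I(Q∘P)`. -/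
noncomputable def MI {𝓧 𝓨 : Type*} [Fintype 𝓧] [Fintype 𝓨]
    (Q : 𝓧 → ℝ) (P : 𝓧 → 𝓨 → ℝ) : ℝ :=
  ∑ x, ∑ y, if Q x * P x y = 0 then 0
    else Q x * P x y * Real.log (P x y / ∑ a, Q a * P a y)

/-- the capacity `C(Z)` of the channel restricted to input letters in `Z`. -/
noncomputable def capacity {𝓧 𝓨 : Type*} [Fintype 𝓧] [Fintype 𝓨]
    (P : 𝓧 → 𝓨 → ℝ) (Z : Set 𝓧) : ℝ :=
  sSup {c | ∃ Q' : 𝓧 → ℝ, IsPMF Q' ∧ (∀ x, 0 < Q' x → x ∈ Z) ∧ c = MI Q' P}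

/-- `R_{−1}^{−}(Q)`. -/
noncomputable def Rm1minus {𝓧 𝓨 : Type*} [Fintype 𝓧] [Fintype 𝓨]
    (Q : 𝓧 → ℝ) (P : 𝓧 → 𝓨 → ℝ) : EReal :=
  sInf {v | ∃ V : 𝓨 → 𝓧 → ℝ, IsCondPMF V ∧ AdmissibleAtM1 Q P V ∧
    v = DTQ (Tm1 Q P) V Q}

/-- `R_{−1}^{+}(Q)`. -/
noncomputable def Rm1plus {𝓧 𝓨 : Type*} [Fintype 𝓧] [Fintype 𝓨]
    (Q : 𝓧 → ℝ) (P : 𝓧 → 𝓨 → ℝ) : EReal :=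
  sSup {v | ∃ V : 𝓨 → 𝓧 → ℝ, IsCondPMF V ∧ AdmissibleAtM1 Q P V ∧
    v = DTQ (Tm1 Q P) V Q}

/-- `F_ρ(T∘V, Q) = D(T∘V‖Q∘P) + ρ·D(T∘V‖T×Q)`. -/
noncomputable def Frho {𝓧 𝓨 : Type*} [Fintype 𝓧] [Fintype 𝓨]
    (ρ : ℝ) (T : 𝓨 → ℝ) (V : 𝓨 → 𝓧 → ℝ) (Q : 𝓧 → ℝ) (P : 𝓧 → 𝓨 → ℝ) : EReal :=
  DQP T V Q P + (ρ : EReal) * DTQ T V Q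

/-- the unconstrained penalized minimum
    `min_{T,V} { D(T∘V‖Q∘P) + ρ·(D(T∘V‖T×Q) − R) }`. -/
noncomputable def penMin {𝓧 𝓨 : Type*} [Fintype 𝓧] [Fintype 𝓨]
    (Q : 𝓧 → ℝ) (P : 𝓧 → 𝓨 → ℝ) (R ρ : ℝ) : EReal :=
  sInf {v | ∃ T : 𝓨 → ℝ, ∃ V : 𝓨 → 𝓧 → ℝ, IsPMF T ∧ IsCondPMF V ∧
    v = DQP T V Q P + (ρ : EReal) * (DTQ T V Q - (R : EReal))}

/-- the support-constrained penalized minimum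
    `min_{T,V : supp(V) ⊆ supp(Q)} { D(T∘V‖Q∘P) − ρ·(R − D(T∘V‖T×Q)) }`. -/
noncomputable def penMinS {𝓧 𝓨 : Type*} [Fintype 𝓧] [Fintype 𝓨]
    (Q : 𝓧 → ℝ) (P : 𝓧 → 𝓨 → ℝ) (R ρ : ℝ) : EReal :=
  sInf {v | ∃ T : 𝓨 → ℝ, ∃ V : 𝓨 → 𝓧 → ℝ, IsPMF T ∧ IsCondPMF V ∧
    (∀ y x, Q x = 0 → V y x = 0) ∧
    v = DQP T V Q P - (ρ : EReal) * ((R : EReal) - DTQ T V Q)}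

section Helpers

lemma klTerm_ne_bot (s t : ℝ) : klTerm s t ≠ ⊥ := by
  unfold klTerm
  split_ifs
  · simp
  · simp
  · exact EReal.coe_ne_bot _

lemma klTerm_self (s : ℝ) : klTerm s s = 0 := by
  unfold klTerm
  split_ifs with h1
  · rfl
  · rw [div_self h1, Real.log_one, mul_zero, EReal.coe_zero]

lemma sum_ne_bot' {ι : Type*} (s : Finset ι) (f : ι → EReal) (h : ∀ i ∈ s, f i ≠ ⊥) :
    ∑ i ∈ s, f i ≠ ⊥ := by
  induction s using Finset.cons_induction with
  | empty => simp
  | cons a s ha ih =>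
      rw [Finset.sum_cons, Ne, EReal.add_eq_bot_iff]
      push_neg
      exact ⟨h a (Finset.mem_cons_self a s), ih fun i hi => h i (Finset.mem_cons_of_mem hi)⟩

lemma sum_ne_top' {ι : Type*} (s : Finset ι) (f : ι → EReal) (h : ∀ i ∈ s, f i ≠ ⊤) :
    ∑ i ∈ s, f i ≠ ⊤ := by
  induction s using Finset.cons_induction with
  | empty => simp
  | cons a s ha ih =>
      rw [Finset.sum_cons]
      exact (EReal.add_lt_top (h a (Finset.mem_cons_self a s))
        (ih fun i hi => h i (Finset.mem_cons_of_mem hi))).ne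

lemma sum_eq_top' {ι : Type*} (s : Finset ι) (f : ι → EReal) (h : ∀ i ∈ s, f i ≠ ⊥)
    {i : ι} (hi : i ∈ s) (hit : f i = ⊤) : ∑ j ∈ s, f j = ⊤ := by
  classical
  rw [← Finset.add_sum_erase s f hi, hit, EReal.top_add_of_ne_bot]
  exact sum_ne_bot' _ _ fun j hj => h j (Finset.mem_of_mem_erase hj)

lemma DQP_ne_bot {𝓧 𝓨 : Type*} [Fintype 𝓧] [Fintype 𝓨]
    (T : 𝓨 → ℝ) (V : 𝓨 → 𝓧 → ℝ) (Q : 𝓧 → ℝ) (P : 𝓧 → 𝓨 → ℝ) : DQP T V Q P ≠ ⊥ :=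
  sum_ne_bot' _ _ fun _ _ => sum_ne_bot' _ _ fun _ _ => klTerm_ne_bot _ _

lemma DTQ_ne_bot {𝓧 𝓨 : Type*} [Fintype 𝓧] [Fintype 𝓨]
    (T : 𝓨 → ℝ) (V : 𝓨 → 𝓧 → ℝ) (Q : 𝓧 → ℝ) : DTQ T V Q ≠ ⊥ :=
  sum_ne_bot' _ _ fun _ _ => sum_ne_bot' _ _ fun _ _ => klTerm_ne_bot _ _

lemma DQP_eq_top {𝓧 𝓨 : Type*} [Fintype 𝓧] [Fintype 𝓨]
    (T : 𝓨 → ℝ) (V : 𝓨 → 𝓧 → ℝ) (Q : 𝓧 → ℝ) (P : 𝓧 → 𝓨 → ℝ)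
    (y : 𝓨) (x : 𝓧) (hs : T y * V y x ≠ 0) (ht : Q x * P x y = 0) : DQP T V Q P = ⊤ := by
  unfold DQP
  refine sum_eq_top' _ _ (fun y' _ => sum_ne_bot' _ _ fun x' _ => klTerm_ne_bot _ _)
    (Finset.mem_univ y) ?_
  refine sum_eq_top' _ _ (fun x' _ => klTerm_ne_bot _ _) (Finset.mem_univ x) ?_
  unfold klTerm
  rw [if_neg hs, if_pos ht]

lemma coe_max' (a b : ℝ) : ((max a b : ℝ) : EReal) = max (a:EReal) (b:EReal) :=
  Monotone.map_max (fun _ _ h => EReal.coe_le_coe_iff.2 h)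

lemma neg_mul_le_max (ρ : ℝ) (hρ1 : -1 ≤ ρ) (hρ2 : ρ ≤ 0) (a : EReal) :
    -((ρ : EReal) * a) ≤ max a 0 := by
  rcases hρ2.lt_or_eq with hneg | h0
  · induction a using EReal.rec with
    | bot => rw [EReal.coe_mul_bot_of_neg hneg]; simp
    | top =>
        rw [EReal.coe_mul_top_of_neg hneg]
        simp
    | coe a =>
        rw [← EReal.coe_mul, ← EReal.coe_neg, ← EReal.coe_zero, ← coe_max',
          EReal.coe_le_coe_iff]
        rcases le_total a 0 with h | h
        · rw [max_eq_right h]; nlinarith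
        · rw [max_eq_left h]; nlinarith
  · rw [h0, EReal.coe_zero, zero_mul, neg_zero]
    exact le_max_right a 0

lemma ereal_add_left_cancel (d : ℝ) (x y : EReal) (h : (d:EReal) + x = (d:EReal) + y) :
    x = y := by
  have h2 := congrArg (fun z => ((-d : ℝ) : EReal) + z) h
  simp only [← add_assoc, ← EReal.coe_add, neg_add_cancel, EReal.coe_zero, zero_add] at h2
  exact h2

lemma sub_nonpos' (R : ℝ) (d : EReal) (h : (R:EReal) - d ≤ 0) : (R:EReal) ≤ d := by
  induction d using EReal.rec with
  | bot => rw [EReal.coe_sub_bot] at h; exact absurd h (by simp)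
  | top => exact le_top
  | coe r =>
      rw [← EReal.coe_sub, EReal.coe_nonpos] at h
      exact EReal.coe_le_coe_iff.2 (by linarith)

lemma sub_nonneg' (R : ℝ) (d : EReal) (hd : d ≠ ⊥) (h : 0 ≤ (R:EReal) - d) :
    d ≤ (R:EReal) := by
  induction d using EReal.rec with
  | bot => exact absurd rfl hd
  | top =>
      exfalso
      have : (R:EReal) - ⊤ = ⊥ := by simp
      rw [this] at h
      exact absurd h (by simp)
  | coe r =>
      rw [← EReal.coe_sub, EReal.coe_nonneg] at h
      exact EReal.coe_le_coe_iff.2 (by linarith)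

lemma sub_nonpos_of_le' (R : ℝ) (d : EReal) (h : (R:EReal) ≤ d) : (R:EReal) - d ≤ 0 := by
  induction d using EReal.rec with
  | bot => exact absurd (le_bot_iff.1 h) (EReal.coe_ne_bot R)
  | top =>
      have hb : (R : EReal) - (⊤ : EReal) = ⊥ := by simp
      rw [hb]
      exact bot_le
  | coe r =>
      rw [← EReal.coe_sub, EReal.coe_nonpos]
      exact sub_nonpos.2 (EReal.coe_le_coe_iff.1 h)

/-- Modifying `V` on fibers where `T y = 0` doesn't change `DQP`. -/
lemma DQP_mod {𝓧 𝓨 : Type*} [Fintype 𝓧] [Fintype 𝓨]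
    (T : 𝓨 → ℝ) (V : 𝓨 → 𝓧 → ℝ) (Q : 𝓧 → ℝ) (P : 𝓧 → 𝓨 → ℝ) :
    DQP T (fun y => if T y = 0 then Q else V y) Q P = DQP T V Q P := by
  unfold DQP
  refine Finset.sum_congr rfl fun y _ => Finset.sum_congr rfl fun x _ => ?_
  by_cases h : T y = 0 <;> simp [h]

lemma DTQ_mod {𝓧 𝓨 : Type*} [Fintype 𝓧] [Fintype 𝓨]
    (T : 𝓨 → ℝ) (V : 𝓨 → 𝓧 → ℝ) (Q : 𝓧 → ℝ) :
    DTQ T (fun y => if T y = 0 then Q else V y) Q = DTQ T V Q := by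
  unfold DTQ
  refine Finset.sum_congr rfl fun y _ => Finset.sum_congr rfl fun x _ => ?_
  by_cases h : T y = 0 <;> simp [h]

/-- If the joint support condition holds, `penMinS` is at most the penalized value. -/
lemma penMinS_le_pen {𝓧 𝓨 : Type*} [Fintype 𝓧] [Fintype 𝓨]
    (P : 𝓧 → 𝓨 → ℝ) (Q : 𝓧 → ℝ) (hQ : IsPMF Q) (R ρ : ℝ)
    (T : 𝓨 → ℝ) (V : 𝓨 → 𝓧 → ℝ) (hT : IsPMF T) (hV : IsCondPMF V)
    (hsupp : ∀ y x, Q x = 0 → T y * V y x = 0) :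
    penMinS Q P R ρ ≤ DQP T V Q P - (ρ : EReal) * ((R : EReal) - DTQ T V Q) := by
  set V' : 𝓨 → 𝓧 → ℝ := fun y => if T y = 0 then Q else V y with hV'def
  have hV' : IsCondPMF V' := by
    intro y
    simp only [hV'def]
    split_ifs
    · exact hQ
    · exact hV y
  have hsupp' : ∀ y x, Q x = 0 → V' y x = 0 := by
    intro y x hQx
    simp only [hV'def]
    split_ifs with h
    · exact hQx
    · rcases mul_eq_zero.1 (hsupp y x hQx) with h' | h'
      · exact absurd h' h
      · exact h'
  have hle : penMinS Q P R ρ ≤ DQP T V' Q P - (ρ : EReal) * ((R : EReal) - DTQ T V' Q) :=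
    sInf_le ⟨T, V', hT, hV', hsupp', rfl⟩
  rwa [hV'def, DQP_mod, DTQ_mod] at hle

/-- `E_c^{ML}` is never `+∞`. -/
lemma EcML_ne_top {𝓧 𝓨 : Type*} [Fintype 𝓧] [Fintype 𝓨] [Nonempty 𝓧] [Nonempty 𝓨]
    (P : 𝓧 → 𝓨 → ℝ) (hP : IsChannel P) (Q : 𝓧 → ℝ) (hQ : IsPMF Q) (R : ℝ) :
    EcML R Q P ≠ ⊤ := by
  classical
  set T0 : 𝓨 → ℝ := fun y => ∑ x, Q x * P x y with hT0def
  set V0 : 𝓨 → 𝓧 → ℝ := fun y x => if T0 y = 0 then Q x else Q x * P x y / T0 y with hV0def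
  have hT0nn : ∀ y, 0 ≤ T0 y := fun y =>
    Finset.sum_nonneg fun x _ => mul_nonneg (hQ.1 x) ((hP x).1 y)
  have hT0 : IsPMF T0 := by
    refine ⟨hT0nn, ?_⟩
    rw [hT0def]
    rw [Finset.sum_comm]
    simp only [← Finset.mul_sum]
    calc ∑ x, Q x * ∑ y, P x y = ∑ x, Q x * 1 := by
          refine Finset.sum_congr rfl fun x _ => by rw [(hP x).2]
      _ = 1 := by simpa using hQ.2
  have hzero : ∀ y, T0 y = 0 → ∀ x, Q x * P x y = 0 := by
    intro y hy x
    have := (Finset.sum_eq_zero_iff_of_nonneg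
      (fun x _ => mul_nonneg (hQ.1 x) ((hP x).1 y))).1 hy
    exact this x (Finset.mem_univ x)
  have hV0 : IsCondPMF V0 := by
    intro y
    simp only [hV0def]
    by_cases h : T0 y = 0
    · simp only [h, if_true, if_pos]
      exact hQ
    · simp only [h, if_false]
      constructor
      · intro x
        exact div_nonneg (mul_nonneg (hQ.1 x) ((hP x).1 y)) (hT0nn y)
      · rw [← Finset.sum_div, div_self h]
  have hjoint : ∀ y x, T0 y * V0 y x = Q x * P x y := by
    intro y x
    simp only [hV0def]
    by_cases h : T0 y = 0
    · rw [if_pos h, h, zero_mul, hzero y h x]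
    · rw [if_neg h, mul_div_cancel₀ _ h]
  have hDQP0 : DQP T0 V0 Q P = 0 := by
    unfold DQP
    refine Finset.sum_eq_zero fun y _ => Finset.sum_eq_zero fun x _ => ?_
    rw [hjoint y x, klTerm_self]
  have hDTQtop : DTQ T0 V0 Q ≠ ⊤ := by
    unfold DTQ
    refine sum_ne_top' _ _ fun y _ => sum_ne_top' _ _ fun x _ => ?_
    rw [hjoint y x]
    unfold klTerm
    split_ifs with h1 h2
    · simp
    · exfalso
      have hQx : Q x ≠ 0 := fun h => h1 (by rw [h, zero_mul])
      have hle : Q x * P x y ≤ T0 y := by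
        rw [hT0def]
        exact Finset.single_le_sum
          (fun x _ => mul_nonneg (hQ.1 x) ((hP x).1 y)) (Finset.mem_univ x)
      have hpos : 0 < Q x * P x y :=
        lt_of_le_of_ne (mul_nonneg (hQ.1 x) ((hP x).1 y)) (Ne.symm h1)
      have : 0 < T0 y * Q x :=
        mul_pos (lt_of_lt_of_le hpos hle) (lt_of_le_of_ne (hQ.1 x) (Ne.symm hQx))
      rw [h2] at this
      exact lt_irrefl 0 this
    · exact EReal.coe_ne_top _
  have hDTQbot : DTQ T0 V0 Q ≠ ⊥ := DTQ_ne_bot _ _ _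
  have hle : EcML R Q P ≤ DQP T0 V0 Q P + max ((R : EReal) - DTQ T0 V0 Q) 0 :=
    sInf_le ⟨T0, V0, hT0, hV0, rfl⟩
  intro htop
  rw [htop, top_le_iff] at hle
  rw [hDQP0, zero_add] at hle
  set r : ℝ := (DTQ T0 V0 Q).toReal with hrdef
  have hr : (r : EReal) = DTQ T0 V0 Q := EReal.coe_toReal hDTQtop hDTQbot
  rw [← hr, ← EReal.coe_sub, ← EReal.coe_zero, ← coe_max'] at hle
  exact EReal.coe_ne_top _ hle

end Helpers


theorem stmt_6 {𝓧 𝓨 : Type*} [Fintype 𝓧] [Fintype 𝓨] [Nonempty 𝓧] [Nonempty 𝓨]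
    (P : 𝓧 → 𝓨 → ℝ) (hP : IsChannel P) (Q : 𝓧 → ℝ) (hQ : IsPMF Q)
    (R ρ : ℝ) (hρ : ρ ∈ Set.Icc (-1 : ℝ) 0) :
    penMinS Q P R ρ ≤ EcML R Q P
    ∧ (EcML R Q P = penMinS Q P R ρ →
        ∀ (T : 𝓨 → ℝ) (V : 𝓨 → 𝓧 → ℝ), IsPMF T → IsCondPMF V →
          DQP T V Q P + max ((R : EReal) - DTQ T V Q) 0 = EcML R Q P →
          DQP T V Q P - (ρ : EReal) * ((R : EReal) - DTQ T V Q) = penMinS Q P R ρ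
          ∧ (-1 < ρ → ρ < 0 → DTQ T V Q = (R : EReal))
          ∧ (ρ = 0 → (R : EReal) ≤ DTQ T V Q)
          ∧ (ρ = -1 → DTQ T V Q ≤ (R : EReal)))
    ∧ (∀ (T : 𝓨 → ℝ) (V : 𝓨 → 𝓧 → ℝ), IsPMF T → IsCondPMF V →
        DQP T V Q P - (ρ : EReal) * ((R : EReal) - DTQ T V Q) = penMinS Q P R ρ →
        (-1 < ρ → ρ < 0 → DTQ T V Q = (R : EReal)) →
        (ρ = 0 → (R : EReal) ≤ DTQ T V Q) →
        (ρ = -1 → DTQ T V Q ≤ (R : EReal)) →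
        DQP T V Q P + max ((R : EReal) - DTQ T V Q) 0 = EcML R Q P
        ∧ EcML R Q P = penMinS Q P R ρ) := by
  obtain ⟨hρ1, hρ2⟩ := hρ
  have hbot0 : (⊥ : EReal) < 0 := EReal.bot_lt_zero
  -- Part 1 : penMinS ≤ EcML
  have part1 : penMinS Q P R ρ ≤ EcML R Q P := by
    refine le_sInf ?_
    rintro v ⟨T, V, hT, hV, rfl⟩
    by_cases hsupp : ∀ y x, Q x = 0 → T y * V y x = 0
    · refine (penMinS_le_pen P Q hQ R ρ T V hT hV hsupp).trans ?_
      rw [sub_eq_add_neg]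
      exact add_le_add_right (neg_mul_le_max ρ hρ1 hρ2 _) _
    · push_neg at hsupp
      obtain ⟨y, x, hQx, hne⟩ := hsupp
      rw [DQP_eq_top T V Q P y x hne (by rw [hQx, zero_mul]),
        EReal.top_add_of_ne_bot (lt_of_lt_of_le hbot0 (le_max_right _ _)).ne']
      exact le_top
  refine ⟨part1, ?_, ?_⟩
  · -- Part 2
    intro hEq T V hT hV hmin
    have hEtop := EcML_ne_top P hP Q hQ R
    have hmaxbot : max ((R : EReal) - DTQ T V Q) 0 ≠ ⊥ :=
      (lt_of_lt_of_le hbot0 (le_max_right _ _)).ne'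
    have hDQPtop : DQP T V Q P ≠ ⊤ := by
      intro h
      rw [h, EReal.top_add_of_ne_bot hmaxbot] at hmin
      exact hEtop hmin.symm
    have hsupp : ∀ y x, Q x = 0 → T y * V y x = 0 := by
      intro y x hQx
      by_contra hne
      exact hDQPtop (DQP_eq_top T V Q P y x hne (by rw [hQx, zero_mul]))
    have h1 := penMinS_le_pen P Q hQ R ρ T V hT hV hsupp
    have h2 : DQP T V Q P - (ρ : EReal) * ((R : EReal) - DTQ T V Q)
        ≤ DQP T V Q P + max ((R : EReal) - DTQ T V Q) 0 := by
      rw [sub_eq_add_neg]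
      exact add_le_add_right (neg_mul_le_max ρ hρ1 hρ2 _) _
    have heq1 : DQP T V Q P - (ρ : EReal) * ((R : EReal) - DTQ T V Q) = penMinS Q P R ρ :=
      le_antisymm (by rw [← hEq, ← hmin]; exact h2) h1
    have hDQPbot := DQP_ne_bot T V Q P
    have hDTQbot := DTQ_ne_bot T V Q
    set d : ℝ := (DQP T V Q P).toReal with hddef
    have hd : (d : EReal) = DQP T V Q P := EReal.coe_toReal hDQPtop hDQPbot
    have hchain : DQP T V Q P + -((ρ : EReal) * ((R : EReal) - DTQ T V Q))
        = DQP T V Q P + max ((R : EReal) - DTQ T V Q) 0 := by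
      rw [← sub_eq_add_neg, heq1, ← hEq, ← hmin]
    rw [← hd] at hchain
    have hcancel := ereal_add_left_cancel d _ _ hchain
    refine ⟨heq1, ?_, ?_, ?_⟩
    · -- -1 < ρ < 0 : DTQ = R
      intro hg hl
      have hDTQtop : DTQ T V Q ≠ ⊤ := by
        intro h
        rw [h] at hcancel
        have hbot : (R : EReal) - (⊤ : EReal) = ⊥ := by simp
        rw [hbot, EReal.coe_mul_bot_of_neg hl] at hcancel
        simp at hcancel
      set r : ℝ := (DTQ T V Q).toReal with hrdef
      have hr : (r : EReal) = DTQ T V Q := EReal.coe_toReal hDTQtop hDTQbot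
      rw [← hr, ← EReal.coe_sub, ← EReal.coe_mul, ← EReal.coe_neg, ← EReal.coe_zero,
        ← coe_max', EReal.coe_eq_coe_iff] at hcancel
      rw [← hr, EReal.coe_eq_coe_iff]
      rcases le_total (R - r) 0 with hb | hb
      · rw [max_eq_right hb] at hcancel
        have hz : ρ * (R - r) = 0 := by linarith
        rcases mul_eq_zero.1 hz with h' | h'
        · exact absurd h' hl.ne
        · linarith
      · rw [max_eq_left hb] at hcancel
        have hz : (1 + ρ) * (R - r) = 0 := by ring_nf; linarith
        rcases mul_eq_zero.1 hz with h' | h'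
        · exact absurd h' (by linarith)
        · linarith
    · -- ρ = 0 : R ≤ DTQ
      intro h0
      rw [h0, EReal.coe_zero, zero_mul, neg_zero] at hcancel
      exact sub_nonpos' R _ (max_eq_right_iff.1 hcancel.symm)
    · -- ρ = -1 : DTQ ≤ R
      intro hm1
      rw [hm1] at hcancel
      have e1 : ((-1 : ℝ) : EReal) = -1 := by norm_num
      rw [e1, EReal.neg_mul, one_mul, neg_neg] at hcancel
      have h0le : (0 : EReal) ≤ (R : EReal) - DTQ T V Q := by
        rw [hcancel]
        exact le_max_right _ _
      exact sub_nonneg' R _ hDTQbot h0le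
  · -- Part 3
    intro T V hT hV hpen h1 h2 h3
    have hDTQbot := DTQ_ne_bot T V Q
    have key : max ((R : EReal) - DTQ T V Q) 0
        = -((ρ : EReal) * ((R : EReal) - DTQ T V Q)) := by
      rcases hρ1.eq_or_lt with hm1 | hg
      · -- ρ = -1
        have h3' := h3 hm1.symm
        have hDTQtop : DTQ T V Q ≠ ⊤ := (lt_of_le_of_lt h3' (EReal.coe_lt_top R)).ne
        set r : ℝ := (DTQ T V Q).toReal with hrdef
        have hr : (r : EReal) = DTQ T V Q := EReal.coe_toReal hDTQtop hDTQbot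
        have hrR : r ≤ R := EReal.coe_le_coe_iff.1 (hr ▸ h3')
        rw [← hr, ← hm1]
        have e1 : ((-1 : ℝ) : EReal) = -1 := by norm_num
        rw [e1, EReal.neg_mul, one_mul, neg_neg, ← EReal.coe_sub, ← EReal.coe_zero,
          ← coe_max', EReal.coe_eq_coe_iff, max_eq_left (by linarith : (0:ℝ) ≤ R - r)]
      · rcases hρ2.lt_or_eq with hl | h0
        · -- -1 < ρ < 0 : DTQ = R
          rw [h1 hg hl, ← EReal.coe_sub, sub_self, EReal.coe_zero, mul_zero, neg_zero,
            max_self]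
        · -- ρ = 0
          have h2' := h2 h0
          rw [h0, EReal.coe_zero, zero_mul, neg_zero]
          exact max_eq_right (sub_nonpos_of_le' R _ h2')
    have hvm : DQP T V Q P + max ((R : EReal) - DTQ T V Q) 0
        = DQP T V Q P - (ρ : EReal) * ((R : EReal) - DTQ T V Q) := by
      rw [key, ← sub_eq_add_neg]
    have hle1 : EcML R Q P ≤ DQP T V Q P + max ((R : EReal) - DTQ T V Q) 0 :=
      sInf_le ⟨T, V, hT, hV, rfl⟩
    constructor
    · exact le_antisymm (by rw [hvm, hpen]; exact part1) hle1
    · exact le_antisymm (by rw [← hpen, ← hvm]; exact hle1) part1
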